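/- Let t > 0 and let V, M : [0, t] → ℝ be continuous functions with V(s) > 0 and M(s) > 0 for all s ∈ [0, t]. Fix θ₀ = (θ₁₀, θ₂₀) ∈ ℝ², and for θ = (θ₁, θ₂) ∈ ℝ² define m_t(θ) = −(1/2) ∫_0^t [ ((θ₁ − θ₁₀) + (θ₂ − θ₂₀))² V(s) + (θ₁ − θ₁₀)² M(s) ] ds. Then m_t(θ) ≤ 0 for all θ, and m_t(θ) = 0 if and only if θ = θ₀. -/
import Mathlib


theorem linear_mean_field_identifiability
    (t : ℝ) (ht : 0 < t) (V M : ℝ → ℝ)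
    (hVc : ContinuousOn V (Set.Icc 0 t)) (hMc : ContinuousOn M (Set.Icc 0 t))
    (hV : ∀ s ∈ Set.Icc (0:ℝ) t, 0 < V s) (hM : ∀ s ∈ Set.Icc (0:ℝ) t, 0 < M s)
    (θ₀ : ℝ × ℝ) (m : ℝ × ℝ → ℝ)
    (hm : ∀ θ : ℝ × ℝ, m θ = -(1/2) * ∫ s in (0:ℝ)..t,
      (((θ.1 - θ₀.1) + (θ.2 - θ₀.2)) ^ 2 * V s + (θ.1 - θ₀.1) ^ 2 * M s)) :
    ∀ θ : ℝ × ℝ, m θ ≤ 0 ∧ (m θ = 0 ↔ θ = θ₀) := by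
  have huIcc : Set.uIcc (0:ℝ) t = Set.Icc 0 t := Set.uIcc_of_le ht.le
  have hVi : IntervalIntegrable V MeasureTheory.volume 0 t := by
    apply ContinuousOn.intervalIntegrable; rwa [huIcc]
  have hMi : IntervalIntegrable M MeasureTheory.volume 0 t := by
    apply ContinuousOn.intervalIntegrable; rwa [huIcc]
  have hIV : 0 < ∫ s in (0:ℝ)..t, V s := by
    apply intervalIntegral.intervalIntegral_pos_of_pos_on hVi _ ht
    intro x hx; exact hV x ⟨hx.1.le, hx.2.le⟩
  have hIM : 0 < ∫ s in (0:ℝ)..t, M s := by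
    apply intervalIntegral.intervalIntegral_pos_of_pos_on hMi _ ht
    intro x hx; exact hM x ⟨hx.1.le, hx.2.le⟩
  intro θ
  set a := θ.1 - θ₀.1 with ha
  set b := θ.2 - θ₀.2 with hb
  have hsplit : (∫ s in (0:ℝ)..t, ((a + b) ^ 2 * V s + a ^ 2 * M s))
      = (a + b) ^ 2 * (∫ s in (0:ℝ)..t, V s) + a ^ 2 * (∫ s in (0:ℝ)..t, M s) := by
    rw [intervalIntegral.integral_add (hVi.const_mul _) (hMi.const_mul _),
      intervalIntegral.integral_const_mul, intervalIntegral.integral_const_mul]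
  have hmθ : m θ = -(1/2) * ((a + b) ^ 2 * (∫ s in (0:ℝ)..t, V s)
      + a ^ 2 * (∫ s in (0:ℝ)..t, M s)) := by
    rw [hm θ, ← hsplit]
  have hnn : 0 ≤ (a + b) ^ 2 * (∫ s in (0:ℝ)..t, V s) + a ^ 2 * (∫ s in (0:ℝ)..t, M s) := by
    positivity
  constructor
  · rw [hmθ]; nlinarith
  · constructor
    · intro h0
      rw [hmθ] at h0
      have hsum : (a + b) ^ 2 * (∫ s in (0:ℝ)..t, V s)
          + a ^ 2 * (∫ s in (0:ℝ)..t, M s) = 0 :=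
        (mul_eq_zero.1 h0).resolve_left (by norm_num)
      have h1 : 0 ≤ (a + b) ^ 2 * (∫ s in (0:ℝ)..t, V s) := by positivity
      have h2 : 0 ≤ a ^ 2 * (∫ s in (0:ℝ)..t, M s) := by positivity
      have haz : a = 0 := by
        have : a ^ 2 * (∫ s in (0:ℝ)..t, M s) = 0 := by linarith
        have := (mul_eq_zero.1 this).resolve_right (ne_of_gt hIM)
        exact pow_eq_zero_iff (n := 2) (by norm_num) |>.1 this
      have hbz : b = 0 := by
        have : (a + b) ^ 2 * (∫ s in (0:ℝ)..t, V s) = 0 := by linarith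
        have := (mul_eq_zero.1 this).resolve_right (ne_of_gt hIV)
        have := pow_eq_zero_iff (n := 2) (by norm_num) |>.1 this
        linarith
      have h1 : θ.1 = θ₀.1 := by rw [ha] at haz; linarith
      have h2 : θ.2 = θ₀.2 := by rw [hb] at hbz; linarith
      exact Prod.ext h1 h2
    · intro h; subst h
      simp only [ha, hb, sub_self] at hmθ
      simpa using hmθ
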